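/- Let T be a tree with order p and diameter d ≥ 2, and let ε = ε(T). Suppose u_0, u_1, ..., u_{p-1} is a linear order of the vertices of T such that (a) u_0 = w and u_{p-1} ∈ N(w) when W(T) = {w}, and {u_0, u_{p-1}} = {w, w'} when W(T) = {w, w'}; and (b) for all 0 ≤ i < j ≤ p-1, d(u_i, u_j) ≥ Σ_{t=i}^{j-1}(L(u_t) + L(u_{t+1})) - (j-i)(d+ε) + (d+1). Then the mapping f defined by f(u_0) = 0 and f(u_{i+1}) = f(u_i) - L(u_{i+1}) - L(u_i) + (d+ε) for 0 ≤ i ≤ p-2 is a radio labeling of T whose span equals rn(T). -/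

import Mathlib

namespace Radio

variable {V : Type*}

/-- The span of a labeling `f`: the maximum of `|f u - f v|` over all pairs of vertices. -/
def span [Fintype V] (f : V → ℕ) : ℕ :=
  Finset.univ.sup fun p : V × V => ((f p.1 : ℤ) - (f p.2 : ℤ)).natAbs

/-- `f` is a radio labeling of `G`: `|f u - f v| ≥ diam G + 1 - d(u,v)` for all distinct `u, v`. -/
def IsRadioLabeling [Fintype V] (G : SimpleGraph V) (f : V → ℕ) : Prop :=
  ∀ u v : V, u ≠ v → G.diam + 1 ≤ G.dist u v + ((f u : ℤ) - (f v : ℤ)).natAbs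

/-- The radio number of `G`: the minimum span of a radio labeling of `G`. -/
noncomputable def radioNumber [Fintype V] (G : SimpleGraph V) : ℕ :=
  sInf { n | ∃ f : V → ℕ, IsRadioLabeling G f ∧ span f = n }

/-- The weight of `G` from a vertex `v`: `w_G(v) = ∑_u d(u, v)`. -/
noncomputable def weightFrom [Fintype V] (G : SimpleGraph V) (v : V) : ℕ :=
  ∑ u : V, G.dist u v

/-- The weight of `G`: the minimum of `w_G(v)` over all vertices `v`. -/
noncomputable def weight [Fintype V] (G : SimpleGraph V) : ℕ :=
  sInf (Set.range (weightFrom G))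

/-- The set of weight centers of `G`: vertices minimizing `w_G(·)`. -/
def weightCenters [Fintype V] (G : SimpleGraph V) : Set V :=
  { v | ∀ x : V, weightFrom G v ≤ weightFrom G x }

/-- The level of a vertex `u`: `L(u) = min { d(u, x) : x ∈ W(G) }`. -/
noncomputable def level [Fintype V] (G : SimpleGraph V) (u : V) : ℕ :=
  sInf (G.dist u '' weightCenters G)

/-- The total level of `G`: `L(G) = ∑_u L(u)`. -/
noncomputable def totalLevel [Fintype V] (G : SimpleGraph V) : ℕ :=
  ∑ u : V, level G u

/-- `ε(G) = 1` if `G` has exactly one weight center, and `0` otherwise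
(for a tree the other case is exactly that of two adjacent weight centers). -/
noncomputable def epsilon [Fintype V] (G : SimpleGraph V) : ℕ :=
  if (weightCenters G).ncard = 1 then 1 else 0

section Aux0
end Aux0

section Aux
open SimpleGraph Finset
set_option linter.unusedSectionVars false
set_option maxHeartbeats 1000000

section Dec
variable [Fintype V] [DecidableEq V] {G : SimpleGraph V}

lemma exists_shortest (hc : G.Connected) (v a : V) :
    ∃ P : G.Walk v a, P.IsPath ∧ P.length = G.dist v a := by
  obtain ⟨W, hW⟩ := hc.exists_walk_length_eq_dist v a
  refine ⟨W.bypass, W.bypass_isPath, le_antisymm ?_ (SimpleGraph.dist_le _)⟩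
  calc W.bypass.length ≤ W.length := W.length_bypass_le
    _ = G.dist v a := hW

lemma dist_add_dist_le_of_mem {v a b : V} (P : G.Walk v a) (hb : b ∈ P.support) :
    G.dist v b + G.dist b a ≤ P.length := by
  have h := P.take_spec hb
  have h1 : G.dist v b ≤ (P.takeUntil b hb).length := SimpleGraph.dist_le _
  have h2 : G.dist b a ≤ (P.dropUntil b hb).length := SimpleGraph.dist_le _
  have h3 : (P.takeUntil b hb).length + (P.dropUntil b hb).length = P.length := by
    conv_rhs => rw [← h]
    rw [SimpleGraph.Walk.length_append]
  omega

lemma exists_path_extend {v a b : V} (P : G.Walk v a) (hP : P.IsPath) (hab : G.Adj a b)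
    (hb : b ∉ P.support) :
    ((SimpleGraph.Walk.cons hab.symm P.reverse).reverse).IsPath ∧
      ((SimpleGraph.Walk.cons hab.symm P.reverse).reverse).length = P.length + 1 := by
  constructor
  · apply SimpleGraph.Walk.IsPath.reverse
    rw [SimpleGraph.Walk.cons_isPath_iff]
    exact ⟨hP.reverse, by simpa using hb⟩
  · simp

lemma path_eq (hT : G.IsTree) {v b : V} {P Q : G.Walk v b} (hP : P.IsPath) (hQ : Q.IsPath) :
    P = Q := by
  obtain ⟨R, -, hR⟩ := hT.existsUnique_path v b
  rw [hR P hP, hR Q hQ]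

lemma no_tie (hT : G.IsTree) {a b : V} (hab : G.Adj a b) (v : V) :
    G.dist v a ≠ G.dist v b := by
  intro h
  obtain ⟨P, hP, hPl⟩ := exists_shortest hT.isConnected v a
  obtain ⟨Q, hQ, hQl⟩ := exists_shortest hT.isConnected v b
  have hba : G.dist b a = 1 := ((SimpleGraph.dist_eq_one_iff_adj).2 hab.symm)
  have hb : b ∉ P.support := by
    intro hb
    have := dist_add_dist_le_of_mem P hb
    rw [hPl, hba, h] at this
    omega
  obtain ⟨hR, hRl⟩ := exists_path_extend P hP hab hb
  have := path_eq hT hR hQ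
  have : ((SimpleGraph.Walk.cons hab.symm P.reverse).reverse).length = Q.length := by rw [this]
  omega

lemma unique_closer (hT : G.IsTree) {b m₁ m₂ v : V} (h₁ : G.Adj b m₁) (h₂ : G.Adj b m₂)
    (hne : m₁ ≠ m₂) (hd₁ : G.dist v m₁ < G.dist v b) (hd₂ : G.dist v m₂ < G.dist v b) :
    False := by
  have key : ∀ (m : V) (h : G.Adj b m), G.dist v m < G.dist v b →
      ∃ (P : G.Walk v m) (hb : b ∉ P.support),
        ((SimpleGraph.Walk.cons (h.symm.symm) P.reverse).reverse).IsPath ∧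
        ((SimpleGraph.Walk.cons (h.symm.symm) P.reverse).reverse).length = G.dist v m + 1 := by
    intro m h hd
    obtain ⟨P, hP, hPl⟩ := exists_shortest hT.isConnected v m
    have hb : b ∉ P.support := by
      intro hb
      have := dist_add_dist_le_of_mem P hb
      have : G.dist v b ≤ G.dist v m := le_trans (Nat.le_add_right _ _) (hPl ▸ this)
      omega
    obtain ⟨h1, h2⟩ := exists_path_extend P hP h.symm hb
    exact ⟨P, hb, h1, by omega⟩
  obtain ⟨P₁, hb₁, hP₁, hl₁⟩ := key m₁ h₁ hd₁
  obtain ⟨P₂, hb₂, hP₂, hl₂⟩ := key m₂ h₂ hd₂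
  have heq := path_eq hT hP₁ hP₂
  have := congrArg (fun W => W.reverse.support) heq
  simp only [SimpleGraph.Walk.reverse_reverse, SimpleGraph.Walk.support_cons] at this
  have : m₁ = m₂ := by
    have h1 := SimpleGraph.Walk.support_eq_cons P₁.reverse
    have h2 := SimpleGraph.Walk.support_eq_cons P₂.reverse
    rw [h1, h2] at this
    exact (by simpa using this : m₁ = m₂ ∧ _).1
  exact hne this

lemma closer_step (hT : G.IsTree) {w b c : V} (hwb : G.Adj w b) (hbc : G.Adj b c)
    (hwc : w ≠ c) {v : V} (h : G.dist v w < G.dist v b) : G.dist v b < G.dist v c := by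
  rcases lt_trichotomy (G.dist v b) (G.dist v c) with h' | h' | h'
  · exact h'
  · exact absurd h' (no_tie hT hbc v)
  · exact (unique_closer hT hwb.symm hbc hwc h h').elim

lemma chain (hT : G.IsTree) {b w' : V} (q : G.Walk b w') (hq : q.IsPath) (hlen : 1 ≤ q.length)
    (w : V) (hwb : G.Adj w b) (hw : w ∉ q.support) :
    ∃ z, G.Adj z w' ∧ ∀ v, (G.dist v w < G.dist v b ∨ v = b) → G.dist v z < G.dist v w' := by
  induction q generalizing w with
  | nil => simp at hlen
  | @cons b x w' h q' ih =>
    cases q' with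
    | nil =>
      refine ⟨b, h, fun v hv => ?_⟩
      rcases hv with hv | rfl
      · refine closer_step hT hwb h (fun hwx => ?_) hv
        exact hw (by rw [hwx]; simp)
      · rw [SimpleGraph.Connected.dist_eq_zero_iff hT.isConnected |>.2 rfl]
        exact hT.isConnected.pos_dist_of_ne h.ne
    | @cons x c w' h' q'' =>
      rw [SimpleGraph.Walk.cons_isPath_iff] at hq
      have hwx : w ≠ x := fun hx => hw (by rw [hx]; simp)
      obtain ⟨z, hz, H⟩ := ih hq.1 (by simp) b h hq.2
      refine ⟨z, hz, fun v hv => ?_⟩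
      apply H
      left
      rcases hv with hv | rfl
      · exact closer_step hT hwb h hwx hv
      · rw [SimpleGraph.Connected.dist_eq_zero_iff hT.isConnected |>.2 rfl]
        exact hT.isConnected.pos_dist_of_ne h.ne

lemma weight_diff (hT : G.IsTree) {a b : V} (hab : G.Adj a b) :
    (weightFrom G a : ℤ) - weightFrom G b =
      (Fintype.card V : ℤ) - 2 * ((univ.filter fun v => G.dist v a < G.dist v b).card) := by
  have key : ∀ v : V, ((G.dist v a : ℤ) - G.dist v b) =
      if G.dist v a < G.dist v b then -1 else 1 := by
    intro v
    have h1 : G.dist v a ≠ G.dist v b := no_tie hT hab v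
    have h2 : G.dist v a ≤ G.dist v b + 1 := by
      have := hT.isConnected.dist_triangle (u := v) (v := b) (w := a)
      have hba : G.dist b a = 1 := (SimpleGraph.dist_eq_one_iff_adj).2 hab.symm
      omega
    have h3 : G.dist v b ≤ G.dist v a + 1 := by
      have := hT.isConnected.dist_triangle (u := v) (v := a) (w := b)
      have hba : G.dist a b = 1 := (SimpleGraph.dist_eq_one_iff_adj).2 hab
      omega
    split <;> rename_i h <;> [skip; push_neg at h] <;> omega
  have : (weightFrom G a : ℤ) - weightFrom G b = ∑ v : V, ((G.dist v a : ℤ) - G.dist v b) := by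
    rw [Finset.sum_sub_distrib]
    push_cast [weightFrom]
    ring
  rw [this, Finset.sum_congr rfl (fun v _ => key v), Finset.sum_ite, Finset.sum_const,
    Finset.sum_const]
  have hcard : (univ.filter fun v => G.dist v a < G.dist v b).card +
      (univ.filter fun v => ¬ G.dist v a < G.dist v b).card = Fintype.card V := by
    rw [Finset.card_filter_add_card_filter_not]
    rfl
  push_cast [← hcard]
  ring

lemma centers_adj (hT : G.IsTree) {w w' : V} (hw : w ∈ weightCenters G)
    (hw' : w' ∈ weightCenters G) (hne : w ≠ w') : G.Adj w w' := by
  by_contra hadj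
  obtain ⟨p, hp, -⟩ := hT.existsUnique_path w w'
  cases p with
  | nil => exact hne rfl
  | @cons w b w' h q =>
    rw [SimpleGraph.Walk.cons_isPath_iff] at hp
    have hqlen : 1 ≤ q.length := by
      rcases Nat.eq_zero_or_pos q.length with h0 | h0
      · have hb : b = w' := SimpleGraph.Walk.eq_of_length_eq_zero h0
        exact absurd (hb ▸ h) hadj
      · exact h0
    obtain ⟨z, hz, H⟩ := chain hT q hp.1 hqlen w h.symm.symm hp.2
    set A1 := univ.filter fun v => G.dist v w < G.dist v b with hA1
    set A2 := univ.filter fun v => G.dist v z < G.dist v w' with hA2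
    set A3 := univ.filter fun v => G.dist v w' < G.dist v z with hA3
    have hc1 : (Fintype.card V : ℤ) ≤ 2 * A1.card := by
      have h1 : (weightFrom G w : ℤ) - weightFrom G b = (Fintype.card V : ℤ) - 2 * A1.card :=
        weight_diff hT h
      have h2 : (weightFrom G w : ℤ) ≤ weightFrom G b := by exact_mod_cast hw b
      omega
    have hc3 : (Fintype.card V : ℤ) ≤ 2 * A3.card := by
      have h1 : (weightFrom G w' : ℤ) - weightFrom G z = (Fintype.card V : ℤ) - 2 * A3.card :=
        weight_diff hT hz.symm
      have h2 : (weightFrom G w' : ℤ) ≤ weightFrom G z := by exact_mod_cast hw' z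
      omega
    have hsub : insert b A1 ⊆ A2 := by
      intro v hv
      rcases Finset.mem_insert.1 hv with rfl | hv
      · exact Finset.mem_filter.2 ⟨Finset.mem_univ _, H v (Or.inr rfl)⟩
      · exact Finset.mem_filter.2 ⟨Finset.mem_univ _, H v (Or.inl (Finset.mem_filter.1 hv).2)⟩
    have hbA1 : b ∉ A1 := by
      intro hb
      have := (Finset.mem_filter.1 hb).2
      rw [SimpleGraph.Connected.dist_eq_zero_iff hT.isConnected |>.2 rfl] at this
      omega
    have h12 : A1.card + 1 ≤ A2.card := by
      have := Finset.card_le_card hsub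
      rwa [Finset.card_insert_of_notMem hbA1] at this
    have h23 : A2.card + A3.card ≤ Fintype.card V := by
      have hdisj : Disjoint A2 A3 := by
        rw [Finset.disjoint_filter]
        intro v _ hv
        omega
      calc A2.card + A3.card = (A2 ∪ A3).card := (Finset.card_union_of_disjoint hdisj).symm
        _ ≤ (univ : Finset V).card := Finset.card_le_card (Finset.subset_univ _)
        _ = Fintype.card V := Finset.card_univ
    omega

lemma no_triangle (hT : G.IsTree) {a b c : V} (hab : G.Adj a b) (hbc : G.Adj b c)
    (hca : G.Adj c a) : False := by
  have hcyc : (SimpleGraph.Walk.cons hab (SimpleGraph.Walk.cons hbc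
      (SimpleGraph.Walk.cons hca SimpleGraph.Walk.nil))).IsCycle := by
    rw [SimpleGraph.Walk.cons_isCycle_iff]
    constructor
    · simp only [SimpleGraph.Walk.cons_isPath_iff, SimpleGraph.Walk.support_cons,
        SimpleGraph.Walk.support_nil, SimpleGraph.Walk.isPath_iff_eq_nil, List.mem_cons,
        List.mem_singleton, List.not_mem_nil]
      push_neg
      exact ⟨⟨trivial, hca.ne, trivial⟩, hbc.ne, hab.ne', trivial⟩
    · simp only [SimpleGraph.Walk.edges_cons, SimpleGraph.Walk.edges_nil, List.mem_cons,
        List.not_mem_nil, or_false, Sym2.eq_iff]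
      push_neg
      refine ⟨⟨fun h => absurd h hab.ne, fun h => absurd h hca.ne'⟩,
        fun h => absurd h hca.ne', fun _ h => hbc.ne h⟩
  exact hT.IsAcyclic _ hcyc

end Dec

section NoDec
variable [Fintype V] {G : SimpleGraph V}

lemma centers_nonempty (G : SimpleGraph V) (hne : Nonempty V) :
    (weightCenters G).Nonempty := by
  classical
  obtain ⟨w, -, hw⟩ := Finset.exists_min_image univ (weightFrom G)
    ⟨Classical.arbitrary V, Finset.mem_univ _⟩
  exact ⟨w, fun x => hw x (Finset.mem_univ x)⟩

lemma centers_cases' (hT : G.IsTree) (hne : Nonempty V) :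
    (∃ w, weightCenters G = {w}) ∨
      (∃ w w', w ≠ w' ∧ G.Adj w w' ∧ weightCenters G = {w, w'}) := by
  classical
  obtain ⟨w, hw⟩ := centers_nonempty G hne
  by_cases hsub : weightCenters G ⊆ {w}
  · exact Or.inl ⟨w, le_antisymm hsub (by simpa using hw)⟩
  · obtain ⟨w', hw', hne'⟩ := Set.not_subset.1 hsub
    have hne' : w ≠ w' := fun h => hne' (by simp [← h])
    have hadj := centers_adj hT hw hw' hne'
    refine Or.inr ⟨w, w', hne', hadj, le_antisymm ?_ ?_⟩
    · intro x hx
      by_contra hxmem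
      simp only [Set.mem_insert_iff, Set.mem_singleton_iff, not_or] at hxmem
      exact no_triangle hT hadj (centers_adj hT hw' hx (Ne.symm hxmem.2))
        (centers_adj hT hx hw (fun h => hxmem.1 h))
    · rintro x (rfl | rfl) <;> assumption

lemma level_center {x : V} (hx : x ∈ weightCenters G) : level G x = 0 := by
  rw [level, Nat.sInf_eq_zero]
  exact Or.inl ⟨x, hx, SimpleGraph.dist_self⟩

lemma level_single {w : V} (h : weightCenters G = {w}) (u : V) : level G u = G.dist u w := by
  rw [level, h, Set.image_singleton, csInf_singleton]

lemma level_pair {w w' : V} (h : weightCenters G = {w, w'}) (u : V) :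
    level G u = min (G.dist u w) (G.dist u w') := by
  rw [level, h, Set.image_pair]; exact csInf_pair _ _

lemma eps_single {w : V} (h : weightCenters G = {w}) : epsilon G = 1 := by
  rw [epsilon, if_pos (by rw [h, Set.ncard_singleton])]

lemma eps_pair {w w' : V} (hne : w ≠ w') (h : weightCenters G = {w, w'}) : epsilon G = 0 := by
  rw [epsilon, if_neg (by rw [h, Set.ncard_pair hne]; omega)]

lemma dist_le_levels (hT : G.IsTree)
    (hc : (∃ w, weightCenters G = {w}) ∨
      (∃ w w', w ≠ w' ∧ G.Adj w w' ∧ weightCenters G = {w, w'}))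
    (u v : V) : G.dist u v + epsilon G ≤ level G u + level G v + 1 := by
  have tri : ∀ a b c : V, G.dist a c ≤ G.dist a b + G.dist b c :=
    fun a b c => hT.isConnected.dist_triangle
  rcases hc with ⟨w, hW⟩ | ⟨w, w', hne, hadj, hW⟩
  · rw [eps_single hW, level_single hW, level_single hW]
    have : G.dist u v ≤ G.dist u w + G.dist w v := tri u w v
    rw [SimpleGraph.dist_comm (u := w) (v := v)] at this
    omega
  · rw [eps_pair hne hW, level_pair hW, level_pair hW]
    have h1 : G.dist w w' = 1 := (SimpleGraph.dist_eq_one_iff_adj).2 hadj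
    have t1 : G.dist u v ≤ G.dist u w + G.dist w v := tri u w v
    have t2 : G.dist u v ≤ G.dist u w' + G.dist w' v := tri u w' v
    have t3 : G.dist u v ≤ G.dist u w + G.dist w w' + G.dist w' v :=
      le_trans (tri u w v) (by have := tri w w' v; omega)
    have t4 : G.dist u v ≤ G.dist u w' + G.dist w' w + G.dist w v :=
      le_trans (tri u w' v) (by have := tri w' w v; omega)
    have h2 : G.dist w' w = 1 := (SimpleGraph.dist_eq_one_iff_adj).2 hadj.symm
    rw [SimpleGraph.dist_comm (u := w) (v := v)] at t1 t4
    rw [SimpleGraph.dist_comm (u := w') (v := v)] at t2 t3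
    omega

lemma eps_le_levels (hT : G.IsTree)
    (hc : (∃ w, weightCenters G = {w}) ∨
      (∃ w w', w ≠ w' ∧ G.Adj w w' ∧ weightCenters G = {w, w'}))
    {x y : V} (hxy : x ≠ y) : epsilon G ≤ level G x + level G y := by
  rcases hc with ⟨w, hW⟩ | ⟨w, w', hne, hadj, hW⟩
  · rw [eps_single hW, level_single hW, level_single hW]
    by_contra hcon
    push_neg at hcon
    have hx : G.dist x w = 0 := by omega
    have hy : G.dist y w = 0 := by omega
    rw [SimpleGraph.Connected.dist_eq_zero_iff hT.isConnected] at hx hy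
    exact hxy (hx.trans hy.symm)
  · rw [eps_pair hne hW]
    omega

lemma sum_enum {M : Type*} [AddCommMonoid M] (y : ℕ → V)
    (hy : ∀ v : V, ∃! i : ℕ, i < Fintype.card V ∧ y i = v) (F : V → M) :
    ∑ i ∈ Finset.range (Fintype.card V), F (y i) = ∑ v : V, F v := by
  refine Finset.sum_nbij' (fun i => y i) (fun v => (hy v).choose) ?_ ?_ ?_ ?_ ?_
  · intro i hi; exact Finset.mem_univ _
  · intro v hv
    simp only [Finset.mem_range]
    exact (hy v).choose_spec.1.1
  · intro i hi
    exact ((hy (y i)).choose_spec.2 i ⟨Finset.mem_range.1 hi, rfl⟩).symm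
  · intro v hv
    exact (hy v).choose_spec.1.2
  · intro i hi; rfl

lemma sum_levels_pairs (y : ℕ → V)
    (hy : ∀ v : V, ∃! i : ℕ, i < Fintype.card V ∧ y i = v) (hp : 1 ≤ Fintype.card V) :
    ∑ t ∈ Finset.range (Fintype.card V - 1), ((level G (y t) : ℤ) + level G (y (t + 1)))
      = 2 * (∑ v : V, (level G v : ℤ)) - level G (y 0)
        - level G (y (Fintype.card V - 1)) := by
  rw [Finset.sum_add_distrib]
  have hL : ∑ i ∈ Finset.range (Fintype.card V), (level G (y i) : ℤ)
      = ∑ v : V, (level G v : ℤ) := sum_enum y hy (fun v => (level G v : ℤ))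
  have hsplit : Fintype.card V = (Fintype.card V - 1) + 1 := by omega
  have h1 : ∑ t ∈ Finset.range (Fintype.card V - 1), (level G (y t) : ℤ)
      = (∑ v : V, (level G v : ℤ)) - level G (y (Fintype.card V - 1)) := by
    rw [← hL, hsplit, Finset.sum_range_succ, ← hsplit]
    ring
  have h2 : ∑ t ∈ Finset.range (Fintype.card V - 1), (level G (y (t + 1)) : ℤ)
      = (∑ v : V, (level G v : ℤ)) - level G (y 0) := by
    rw [← hL, hsplit, Finset.sum_range_succ', ← hsplit]
    ring
  rw [h1, h2]; ring

lemma exists_sorted_enum (hne : Nonempty V) (g : V → ℕ) (hg : Function.Injective g) :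
    ∃ y : ℕ → V, (∀ v : V, ∃! i : ℕ, i < Fintype.card V ∧ y i = v) ∧
      ∀ i j : ℕ, i < j → j < Fintype.card V → g (y i) < g (y j) := by
  letI : LinearOrder V := LinearOrder.lift' g hg
  let e := monoEquivOfFin V rfl
  have hp : 0 < Fintype.card V := Fintype.card_pos
  refine ⟨fun n => if h : n < Fintype.card V then e ⟨n, h⟩ else e ⟨0, hp⟩, ?_, ?_⟩
  · intro v
    refine ⟨(e.symm v : Fin (Fintype.card V)).1, ⟨(e.symm v).2, ?_⟩, ?_⟩
    · simp only [(e.symm v).2, dif_pos, Fin.eta, OrderIso.apply_symm_apply]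
    · rintro j ⟨hj, hje⟩
      simp only [hj, dif_pos] at hje
      have : (⟨j, hj⟩ : Fin (Fintype.card V)) = e.symm v := by
        rw [← hje]; simp
      exact (congrArg Fin.val this : _)
  · intro i j hij hj
    simp only [hj, hij.trans hj, dif_pos]
    have : e ⟨i, hij.trans hj⟩ < e ⟨j, hj⟩ := by
      apply e.strictMono
      exact hij
    exact lt_of_le_of_ne (show g _ ≤ g _ from this.le) (fun h => this.ne (hg h))

end NoDec
end Aux

open SimpleGraph Finset in
/-- Given a linear order of the vertices of a tree `T` (diameter `d ≥ 2`)
satisfying conditions (a) and (b), the labeling `f` defined by `f(u 0) = 0` and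
`f(u (i+1)) = f(u i) - L(u (i+1)) - L(u i) + (d + ε)` is a radio labeling of `T`
whose span equals `rn(T)` (i.e. it is optimal). -/
theorem isRadioLabeling_of_order {V : Type*} [Fintype V]
    (G : SimpleGraph V) (hT : G.IsTree) (hd : 2 ≤ G.diam)
    (u : ℕ → V)
    (horder : ∀ v : V, ∃! i : ℕ, i < Fintype.card V ∧ u i = v)
    -- (a), one weight center case
    (ha1 : ∀ w : V, weightCenters G = {w} →
      u 0 = w ∧ G.Adj w (u (Fintype.card V - 1)))
    -- (a), two weight centers case
    (ha2 : ∀ w w' : V, w ≠ w' → weightCenters G = {w, w'} →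
      ({u 0, u (Fintype.card V - 1)} : Set V) = {w, w'})
    -- (b)
    (hb : ∀ i j : ℕ, i < j → j ≤ Fintype.card V - 1 →
      (∑ t ∈ Finset.Ico i j, ((level G (u t) : ℤ) + (level G (u (t + 1)) : ℤ)))
          - ((j : ℤ) - (i : ℤ)) * ((G.diam : ℤ) + (epsilon G : ℤ)) + ((G.diam : ℤ) + 1)
        ≤ (G.dist (u i) (u j) : ℤ))
    -- the labeling defined by the recursion (6)-(7)
    (f : V → ℕ)
    (hf0 : f (u 0) = 0)
    (hf : ∀ i : ℕ, i ≤ Fintype.card V - 2 →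
      (f (u (i + 1)) : ℤ) =
        (f (u i) : ℤ) - (level G (u (i + 1)) : ℤ) - (level G (u i) : ℤ)
          + ((G.diam : ℤ) + (epsilon G : ℤ))) :
    IsRadioLabeling G f ∧ span f = radioNumber G := by
  haveI hne : Nonempty V := hT.isConnected.nonempty
  set p := Fintype.card V with hp
  -- basic cardinality facts
  have hediam0 : G.ediam ≠ 0 := by
    intro h
    rw [SimpleGraph.diam, h] at hd
    simp at hd
  haveI : Nontrivial V := SimpleGraph.nontrivial_of_ediam_ne_zero hediam0
  have hp2 : 2 ≤ p := Fintype.one_lt_card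
  have hdd : ∀ a b : V, G.dist a b ≤ G.diam := fun a b =>
    SimpleGraph.dist_le_diam (SimpleGraph.ediam_ne_top_of_diam_ne_zero (by omega))
  have hcases := centers_cases' hT hne
  -- telescoping for f
  have ftel : ∀ j : ℕ, j ≤ p - 1 → (f (u j) : ℤ) =
      ∑ t ∈ range j, ((G.diam : ℤ) + epsilon G - level G (u t) - level G (u (t + 1))) := by
    intro j
    induction j with
    | zero => intro _; simp [hf0]
    | succ n ih =>
      intro hj
      rw [Finset.sum_range_succ, ← ih (by omega), hf n (by omega)]
      ring
  have fdiff : ∀ i j : ℕ, i ≤ j → j ≤ p - 1 → (f (u j) : ℤ) - f (u i) =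
      ∑ t ∈ Ico i j, ((G.diam : ℤ) + epsilon G - level G (u t) - level G (u (t + 1))) := by
    intro i j hij hj
    rw [ftel j hj, ftel i (le_trans hij hj), Finset.sum_Ico_eq_sub _ hij]
  have sum_split : ∀ (y : ℕ → V) (i j : ℕ), i ≤ j →
      ∑ t ∈ Ico i j, ((G.diam : ℤ) + epsilon G - level G (y t) - level G (y (t + 1)))
        = ((j : ℤ) - i) * ((G.diam : ℤ) + epsilon G)
          - ∑ t ∈ Ico i j, ((level G (y t) : ℤ) + level G (y (t + 1))) := by
    intro y i j hij
    have : ∀ t ∈ Ico i j, ((G.diam : ℤ) + epsilon G - level G (y t) - level G (y (t + 1)))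
        = ((G.diam : ℤ) + epsilon G) - ((level G (y t) : ℤ) + level G (y (t + 1))) := by
      intro t _; ring
    rw [Finset.sum_congr rfl this, Finset.sum_sub_distrib, Finset.sum_const, Nat.card_Ico,
      nsmul_eq_mul, Nat.cast_sub hij]
    try ring
  have key : ∀ i j : ℕ, i < j → j ≤ p - 1 →
      (G.diam : ℤ) + 1 ≤ G.dist (u i) (u j) + ((f (u j) : ℤ) - f (u i)) := by
    intro i j hij hj
    have h1 := hb i j hij hj
    have h2 := fdiff i j hij.le hj
    rw [sum_split u i j hij.le] at h2
    linarith
  -- radio labeling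
  have radio : IsRadioLabeling G f := by
    intro a b hab
    obtain ⟨i, ⟨hi, rfl⟩, -⟩ := horder a
    obtain ⟨j, ⟨hj, rfl⟩, -⟩ := horder b
    have hij : i ≠ j := fun h => hab (h ▸ rfl)
    have hcomm : G.dist (u i) (u j) = G.dist (u j) (u i) := SimpleGraph.dist_comm
    rcases hij.lt_or_gt with h | h
    · have := key i j h (by omega)
      omega
    · have := key j i h (by omega)
      omega
  refine ⟨radio, ?_⟩
  -- monotonicity and span of f
  have gap : ∀ t : ℕ, t + 1 ≤ p - 1 →
      (1 : ℤ) ≤ (G.diam : ℤ) + epsilon G - level G (u t) - level G (u (t + 1)) := by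
    intro t ht
    have h1 := hb t (t + 1) (by omega) ht
    rw [Nat.Ico_succ_singleton, Finset.sum_singleton] at h1
    have h2 : (G.dist (u t) (u (t + 1)) : ℤ) ≤ G.diam := by exact_mod_cast hdd _ _
    push_cast at h1
    linarith
  have fmono : ∀ i j : ℕ, i ≤ j → j ≤ p - 1 → (f (u i) : ℤ) ≤ f (u j) := by
    intro i j hij hj
    have h2 := fdiff i j hij hj
    have h3 : (0 : ℤ) ≤
        ∑ t ∈ Ico i j, ((G.diam : ℤ) + epsilon G - level G (u t) - level G (u (t + 1))) := by
      apply Finset.sum_nonneg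
      intro t ht
      have := gap t (by have := (Finset.mem_Ico.1 ht).2; omega)
      linarith
    linarith
  have fub : ∀ v : V, f v ≤ f (u (p - 1)) := by
    intro v
    obtain ⟨i, ⟨hi, rfl⟩, -⟩ := horder v
    exact_mod_cast fmono i (p - 1) (by omega) le_rfl
  have span_eq : span f = f (u (p - 1)) := by
    apply le_antisymm
    · apply Finset.sup_le
      rintro ⟨a, b⟩ -
      have h1 := fub a
      have h2 := fub b
      simp only
      omega
    · have h := Finset.le_sup (f := fun q : V × V => ((f q.1 : ℤ) - (f q.2 : ℤ)).natAbs)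
        (Finset.mem_univ (u (p - 1), u 0))
      simp only [hf0] at h
      rw [span]
      omega
  -- value of the span
  have ends : (level G (u 0) : ℤ) + level G (u (p - 1)) = epsilon G := by
    rcases hcases with ⟨w, hW⟩ | ⟨w, w', hww, hadj, hW⟩
    · obtain ⟨h0, hadj⟩ := ha1 w hW
      rw [eps_single hW, level_single hW, level_single hW, h0]
      have e1 : G.dist w w = 0 := SimpleGraph.dist_self
      have e2 : G.dist (u (p - 1)) w = 1 := SimpleGraph.dist_eq_one_iff_adj.2 hadj.symm
      rw [e1, e2]
      norm_num
    · have hP := ha2 w w' hww hW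
      have h1 : u 0 ∈ weightCenters G := by
        rw [hW, ← hP]; exact Set.mem_insert _ _
      have h2 : u (p - 1) ∈ weightCenters G := by
        rw [hW, ← hP]; exact Set.mem_insert_iff.2 (Or.inr rfl)
      rw [eps_pair hww hW, level_center h1, level_center h2]
      norm_num
  have span_val : (f (u (p - 1)) : ℤ) =
      ((p : ℤ) - 1) * ((G.diam : ℤ) + epsilon G) - 2 * (∑ v : V, (level G v : ℤ))
        + epsilon G := by
    have h1 := ftel (p - 1) le_rfl
    rw [← Nat.Ico_zero_eq_range] at h1
    rw [h1, sum_split u 0 (p - 1) (by omega), Nat.Ico_zero_eq_range,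
      sum_levels_pairs u horder (by omega)]
    push_cast [Nat.cast_sub (by omega : 1 ≤ p)]
    linarith [ends]
  -- the lower bound
  have lower : ∀ g : V → ℕ, IsRadioLabeling G g → (f (u (p - 1)) : ℤ) ≤ span g := by
    intro g hg
    have hginj : Function.Injective g := by
      intro a b hab
      by_contra hne'
      have h1 := hg a b hne'
      have h2 : ((g a : ℤ) - g b).natAbs = 0 := by rw [hab]; simp
      have h3 := hdd a b
      omega
    obtain ⟨y, hy, hymono⟩ := exists_sorted_enum hne g hginj
    have gaps : ∀ t : ℕ, t < p - 1 →
        (G.diam : ℤ) + epsilon G - level G (y t) - level G (y (t + 1))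
          ≤ (g (y (t + 1)) : ℤ) - g (y t) := by
      intro t ht
      have hlt : g (y t) < g (y (t + 1)) := hymono t (t + 1) (by omega) (by omega)
      have hne' : y t ≠ y (t + 1) := fun h => by rw [h] at hlt; omega
      have h1 := hg (y t) (y (t + 1)) hne'
      have h2 := dist_le_levels hT hcases (y t) (y (t + 1))
      omega
    have htel := Finset.sum_range_sub (fun i => (g (y i) : ℤ)) (p - 1)
    have hsum : ∑ t ∈ range (p - 1),
        ((G.diam : ℤ) + epsilon G - level G (y t) - level G (y (t + 1)))
          ≤ ∑ t ∈ range (p - 1), ((g (y (t + 1)) : ℤ) - g (y t)) := by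
      apply Finset.sum_le_sum
      intro t ht
      exact gaps t (mem_range.1 ht)
    rw [htel] at hsum
    have hLHS : ∑ t ∈ range (p - 1),
        ((G.diam : ℤ) + epsilon G - level G (y t) - level G (y (t + 1)))
        = ((p : ℤ) - 1) * ((G.diam : ℤ) + epsilon G)
          - (2 * (∑ v : V, (level G v : ℤ)) - level G (y 0) - level G (y (p - 1))) := by
      rw [← Nat.Ico_zero_eq_range, sum_split y 0 (p - 1) (by omega), Nat.Ico_zero_eq_range,
        sum_levels_pairs y hy (by omega)]
      push_cast [Nat.cast_sub (by omega : 1 ≤ p)]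
      ring
    have heps : (epsilon G : ℤ) ≤ level G (y 0) + level G (y (p - 1)) := by
      have hne0 : y 0 ≠ y (p - 1) := by
        have := hymono 0 (p - 1) (by omega) (by omega)
        intro h; rw [h] at this; omega
      exact_mod_cast eps_le_levels hT hcases hne0
    have hspan : ((g (y (p - 1)) : ℤ) - g (y 0)).natAbs ≤ span g :=
      Finset.le_sup (f := fun q : V × V => ((g q.1 : ℤ) - (g q.2 : ℤ)).natAbs)
        (Finset.mem_univ (y (p - 1), y 0))
    rw [span_val]
    have h5 : ((p : ℤ) - 1) * ((G.diam : ℤ) + epsilon G)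
        - (2 * (∑ v : V, (level G v : ℤ)) - level G (y 0) - level G (y (p - 1)))
          ≤ (g (y (p - 1)) : ℤ) - g (y 0) := by rw [← hLHS]; exact hsum
    omega
  -- conclusion
  have hmem : span f ∈ { n | ∃ f' : V → ℕ, IsRadioLabeling G f' ∧ span f' = n } :=
    ⟨f, radio, rfl⟩
  apply le_antisymm
  · apply le_csInf ⟨span f, hmem⟩
    rintro n ⟨g, hgr, rfl⟩
    have := lower g hgr
    rw [span_eq]
    exact_mod_cast this
  · exact Nat.sInf_le hmem

end Radio
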